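/- arXiv:2310.18774 — 3 statements merged into one kernel-verified Lean document; each statement's English description precedes it below -/
import Mathlib

section
/- Let b : ℝ^d × Θ → ℝ^d be such that b(·,θ) is C¹ with symmetric Jacobian, u^⊤ ∇_x b(x,θ) u ≥ m|u|² for all x outside the ball of radius R and all u, and |∇_x b(x,θ)u| ≤ L|u| for all x, u. Then for any x, y ∈ ℝ^d with |x−y| ≥ 4R(1+L/m) and any u ∈ ℝ^d, one has u^⊤ (∫₀¹ ∇_x b(x+t(y−x),θ) dt) u ≥ (m/2)|u|². -/
open scoped RealInnerProductSpace
open MeasureTheory Set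

theorem stmt0 {d : ℕ} {Θ : Type*} (m L R : ℝ)
    (hm : 0 < m) (hL : 0 < L) (hR : 0 < R) (hmL : m ≤ L)
    (b : EuclideanSpace ℝ (Fin d) → Θ → EuclideanSpace ℝ (Fin d))
    (Db : EuclideanSpace ℝ (Fin d) → Θ → EuclideanSpace ℝ (Fin d) →L[ℝ] EuclideanSpace ℝ (Fin d))
    (hderiv : ∀ θ x, HasFDerivAt (fun x => b x θ) (Db x θ) x)
    (hcont : ∀ θ, Continuous fun x => Db x θ)
    (hsymm : ∀ θ x u v, ⟪Db x θ u, v⟫ = ⟪u, Db x θ v⟫)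
    (hlow : ∀ θ (x : EuclideanSpace ℝ (Fin d)), R < ‖x‖ →
      ∀ u, m * ‖u‖ ^ 2 ≤ ⟪u, Db x θ u⟫)
    (hup : ∀ θ (x u : EuclideanSpace ℝ (Fin d)), ‖Db x θ u‖ ≤ L * ‖u‖)
    (θ : Θ) (x y : EuclideanSpace ℝ (Fin d))
    (hxy : 4 * R * (1 + L / m) ≤ ‖x - y‖)
    (u : EuclideanSpace ℝ (Fin d)) :
    m / 2 * ‖u‖ ^ 2 ≤ ⟪u, ∫ t in (0:ℝ)..1, Db (x + t • (y - x)) θ u⟫ := by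
  set v := y - x with hv
  have hvnorm : 4 * R * (1 + L / m) ≤ ‖v‖ := by
    rw [hv, norm_sub_rev]; exact hxy
  have hvpos : 0 < ‖v‖ := lt_of_lt_of_le (by positivity) hvnorm
  set c := ‖u‖ ^ 2 with hc
  have hcnn : 0 ≤ c := by positivity
  -- the vector-valued integrand
  set F : ℝ → EuclideanSpace ℝ (Fin d) := fun t => Db (x + t • v) θ u with hF
  have hFcont : Continuous F := by
    have : Continuous fun t : ℝ => Db (x + t • v) θ :=
      (hcont θ).comp (by continuity)
    exact (ContinuousLinearMap.apply ℝ (EuclideanSpace ℝ (Fin d)) u).continuous.comp this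
  have hFint : IntervalIntegrable F volume 0 1 := hFcont.intervalIntegrable 0 1
  -- move the inner product inside the integral
  have hswap : ⟪u, ∫ t in (0:ℝ)..1, F t⟫ = ∫ t in (0:ℝ)..1, ⟪u, F t⟫ :=
    ((innerSL ℝ u).intervalIntegral_comp_comm hFint).symm
  rw [hswap]
  set f : ℝ → ℝ := fun t => ⟪u, F t⟫ with hf
  have hfcont : Continuous f := continuous_const.inner hFcont
  have hfint : IntervalIntegrable f volume 0 1 := hfcont.intervalIntegrable 0 1
  -- the bad set
  set S : Set ℝ := {t : ℝ | ‖x + t • v‖ ≤ R} with hS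
  have hSmeas : MeasurableSet S := by
    have hSeq : S = (fun t : ℝ => ‖x + t • v‖) ⁻¹' Iic R := rfl
    have hc1 : Continuous fun t : ℝ => ‖x + t • v‖ :=
      (continuous_const.add (continuous_id.smul continuous_const)).norm
    rw [hSeq]
    exact (isClosed_Iic.preimage hc1).measurableSet
  -- diameter bound
  have hdiam : ∀ a ∈ S, ∀ b ∈ S, dist a b ≤ 2 * R / ‖v‖ := by
    intro a ha b' hb
    have key : |a - b'| * ‖v‖ ≤ 2 * R := by
      have : ‖(a - b') • v‖ = ‖(x + a • v) - (x + b' • v)‖ := by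
        rw [sub_smul]; congr 1; abel
      rw [norm_smul, Real.norm_eq_abs] at this
      calc |a - b'| * ‖v‖ = ‖(x + a • v) - (x + b' • v)‖ := this
        _ ≤ ‖x + a • v‖ + ‖x + b' • v‖ := norm_sub_le _ _
        _ ≤ R + R := add_le_add ha hb
        _ = 2 * R := by ring
    rw [Real.dist_eq]
    exact (le_div_iff₀ hvpos).mpr key
  have hvolS : volume S ≤ ENNReal.ofReal (2 * R / ‖v‖) := by
    refine (Real.volume_le_diam S).trans ?_
    refine EMetric.diam_le ?_
    intro a ha b' hb
    rw [edist_dist]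
    exact ENNReal.ofReal_le_ofReal (hdiam a ha b' hb)
  -- measure of S ∩ Ioc 0 1
  set μS : ℝ := (volume (S ∩ Ioc (0:ℝ) 1)).toReal with hμS
  have hμSnn : 0 ≤ μS := ENNReal.toReal_nonneg
  have hμSle : μS ≤ 2 * R / ‖v‖ := by
    have h1 : volume (S ∩ Ioc (0:ℝ) 1) ≤ ENNReal.ofReal (2 * R / ‖v‖) :=
      le_trans (measure_mono (inter_subset_left)) hvolS
    have := ENNReal.toReal_mono (by simp) h1
    rwa [ENNReal.toReal_ofReal (by positivity)] at this
  -- lower bound function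
  set g : ℝ → ℝ := fun t => m * c - (m + L) * c * S.indicator (fun _ => (1:ℝ)) t with hg
  have hgint : IntervalIntegrable g volume 0 1 := by
    refine IntervalIntegrable.sub (intervalIntegrable_const) ?_
    refine IntervalIntegrable.const_mul ?_ _
    rw [intervalIntegrable_iff_integrableOn_Ioc_of_le (by norm_num)]
    exact (integrableOn_const measure_Ioc_lt_top.ne).indicator hSmeas
  have hle : ∀ t ∈ Icc (0:ℝ) 1, g t ≤ f t := by
    intro t _
    by_cases ht : t ∈ S
    · have h1 : g t = -(L * c) := by
        simp only [hg, Set.indicator_of_mem ht]; ring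
      rw [h1]
      have h2 : |⟪u, F t⟫| ≤ ‖u‖ * ‖F t‖ := abs_real_inner_le_norm u (F t)
      have h3 : ‖F t‖ ≤ L * ‖u‖ := hup θ _ u
      have h4 : ‖u‖ * ‖F t‖ ≤ L * c := by
        calc ‖u‖ * ‖F t‖ ≤ ‖u‖ * (L * ‖u‖) :=
              mul_le_mul_of_nonneg_left h3 (norm_nonneg u)
          _ = L * c := by rw [hc]; ring
      linarith [neg_abs_le ⟪u, F t⟫, h2, h4]
    · have hnot : R < ‖x + t • v‖ := lt_of_not_ge ht
      have h1 : g t = m * c := by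
        simp only [hg, Set.indicator_of_notMem ht]; ring
      rw [h1]
      exact hlow θ _ hnot u
  have hmono : ∫ t in (0:ℝ)..1, g t ≤ ∫ t in (0:ℝ)..1, f t :=
    intervalIntegral.integral_mono_on (by norm_num) hgint hfint hle
  -- compute ∫ g
  have hind : ∫ t in (0:ℝ)..1, S.indicator (fun _ => (1:ℝ)) t = μS := by
    rw [intervalIntegral.integral_of_le (by norm_num : (0:ℝ) ≤ 1),
      MeasureTheory.setIntegral_indicator hSmeas, setIntegral_const]
    simp [hμS, Set.inter_comm]; rfl
  have hgval : ∫ t in (0:ℝ)..1, g t = m * c - (m + L) * c * μS := by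
    rw [hg]
    rw [intervalIntegral.integral_sub intervalIntegrable_const
      (by
        refine IntervalIntegrable.const_mul ?_ _
        rw [intervalIntegrable_iff_integrableOn_Ioc_of_le (by norm_num)]
        exact (integrableOn_const measure_Ioc_lt_top.ne).indicator hSmeas)]
    simp only [intervalIntegral.integral_const, smul_eq_mul, mul_one, sub_zero]
    rw [intervalIntegral.integral_const_mul, hind]
    ring
  -- final arithmetic
  have hkey : (m + L) * (2 * R / ‖v‖) ≤ m / 2 := by
    have h2 : 4 * R * (1 + L / m) * m = 4 * R * (m + L) := by
      field_simp
    have h3 := mul_le_mul_of_nonneg_right hvnorm hm.le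
    rw [h2] at h3
    have h4 : 4 * R * (m + L) ≤ m * ‖v‖ := by linarith [h3]
    rw [mul_div_assoc', div_le_div_iff₀ hvpos (by norm_num : (0:ℝ) < 2)]
    nlinarith
  have hbound : (m + L) * c * μS ≤ m / 2 * c := by
    calc (m + L) * c * μS ≤ (m + L) * c * (2 * R / ‖v‖) := by
          apply mul_le_mul_of_nonneg_left hμSle (by positivity)
      _ = ((m + L) * (2 * R / ‖v‖)) * c := by ring
      _ ≤ (m / 2) * c := mul_le_mul_of_nonneg_right hkey hcnn
  have : m / 2 * c ≤ m * c - (m + L) * c * μS := by linarith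
  calc m / 2 * c ≤ ∫ t in (0:ℝ)..1, g t := by rw [hgval]; linarith
    _ ≤ ∫ t in (0:ℝ)..1, f t := hmono
end

section
/- Define for r ≥ 0 the function g₀(r) = 2 e^{aCr} Φ(−r/2) + (1/√(2π)) ∫_{−r/2}^∞ e^{−2aCu} [e^{−u²/2} − e^{−(u+r)²/2}] du, where a, C > 0 are constants (a plays the role of ĝT̂ and the argument is scaled so r* T̂ = 1). Then the derivative satisfies ∂_r g₀(r) = (2aC / √(2π)) e^{aCr} ∫_{−∞}^{−r/2} e^{−u²/2} (1 − e^{aC(2u + r)}) du for all r ≥ 0. -/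
open MeasureTheory

/-- The standard normal density. -/
noncomputable def stdGaussPDF (x : ℝ) : ℝ :=
  (Real.sqrt (2 * Real.pi))⁻¹ * Real.exp (-x ^ 2 / 2)

/-- The standard normal cumulative distribution function. -/
noncomputable def stdGaussCDF (x : ℝ) : ℝ :=
  ∫ s in Set.Iic x, stdGaussPDF s

namespace Stmt6Aux

/-- The tilted Gaussian kernel. -/
noncomputable def G (b u : ℝ) : ℝ := Real.exp (-(2 * b * u) - u ^ 2 / 2)

lemma G_eq (b u : ℝ) : G b u = Real.exp (2 * b ^ 2) * Real.exp (-(1 / 2) * (u + 2 * b) ^ 2) := by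
  rw [G, ← Real.exp_add]; ring_nf

lemma integrable_shift {f : ℝ → ℝ} (hf : Integrable f) (d : ℝ) :
    Integrable (fun x => f (x + d)) := by
  have A : MeasurableEmbedding (fun x : ℝ => x + d) :=
    (Homeomorph.addRight d).isClosedEmbedding.measurableEmbedding
  rw [← map_add_right_eq_self volume d] at hf
  exact A.integrable_map_iff.mp hf

lemma integrable_G (b : ℝ) : Integrable (G b) := by
  have h0 : Integrable (fun x : ℝ => Real.exp (-(1 / 2 : ℝ) * x ^ 2)) :=
    integrable_exp_neg_mul_sq (by norm_num)
  have h1 : Integrable (fun u : ℝ => Real.exp (-(1 / 2 : ℝ) * (u + 2 * b) ^ 2)) :=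
    integrable_shift h0 (2 * b)
  have := h1.const_mul (Real.exp (2 * b ^ 2))
  exact this.congr (Filter.Eventually.of_forall fun u => (G_eq b u).symm)

lemma continuous_G (b : ℝ) : Continuous (G b) := by
  unfold G; fun_prop

/-- Integral of `G b` over the tail. -/
noncomputable def H (b x : ℝ) : ℝ := ∫ u in Set.Ioi x, G b u

lemma integral_Ioi_add_right (f : ℝ → ℝ) (c d : ℝ) :
    (∫ x in Set.Ioi c, f (x + d)) = ∫ x in Set.Ioi (c + d), f x := by
  have A : MeasurableEmbedding (fun x : ℝ => x + d) :=
    (Homeomorph.addRight d).isClosedEmbedding.measurableEmbedding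
  have h := A.setIntegral_map (μ := volume) f (Set.Ioi (c + d))
  rw [map_add_right_eq_self volume d] at h
  have hpre : (fun x : ℝ => x + d) ⁻¹' Set.Ioi (c + d) = Set.Ioi c := by
    rw [Set.preimage_add_const_Ioi]; ring_nf
  rw [h, hpre]

lemma H_eq (b x : ℝ) :
    H b x = (∫ u, G b u) - ((∫ u in Set.Iic (0:ℝ), G b u) + ∫ u in (0:ℝ)..x, G b u) := by
  have hint := integrable_G b
  have h1 : (∫ u in Set.Iic x, G b u) + (∫ u in Set.Ioi x, G b u) = ∫ u, G b u :=
    intervalIntegral.integral_Iic_add_Ioi hint.integrableOn hint.integrableOn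
  have h2 : (∫ u in Set.Iic x, G b u) - (∫ u in Set.Iic (0:ℝ), G b u) = ∫ u in (0:ℝ)..x, G b u :=
    intervalIntegral.integral_Iic_sub_Iic hint.integrableOn hint.integrableOn
  unfold H
  linarith [h1, h2]

lemma hasDerivAt_H (b x : ℝ) : HasDerivAt (H b) (-(G b x)) x := by
  have hint := integrable_G b
  have hftc : HasDerivAt (fun y => ∫ u in (0:ℝ)..y, G b u) (G b x) x :=
    intervalIntegral.integral_hasDerivAt_right hint.intervalIntegrable
      ((continuous_G b).stronglyMeasurableAtFilter volume (nhds x))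
      (continuous_G b).continuousAt
  have h : HasDerivAt (fun y => (∫ u, G b u) -
      ((∫ u in Set.Iic (0:ℝ), G b u) + ∫ u in (0:ℝ)..y, G b u)) (-(G b x)) x := by
    simpa [Pi.sub_def, Pi.add_def] using ((hasDerivAt_const x (∫ u, G b u)).sub
      ((hasDerivAt_const x (∫ u in Set.Iic (0:ℝ), G b u)).add hftc))
  exact h.congr_of_eventuallyEq (Filter.Eventually.of_forall fun y => H_eq b y)

lemma integrable_pdf : Integrable stdGaussPDF := by
  have h0 : Integrable (fun x : ℝ => Real.exp (-(1 / 2 : ℝ) * x ^ 2)) :=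
    integrable_exp_neg_mul_sq (by norm_num)
  have := h0.const_mul (Real.sqrt (2 * Real.pi))⁻¹
  exact this.congr (Filter.Eventually.of_forall fun u => by
    unfold stdGaussPDF; ring_nf)

lemma continuous_pdf : Continuous stdGaussPDF := by
  unfold stdGaussPDF; fun_prop

lemma hasDerivAt_CDF (x : ℝ) : HasDerivAt stdGaussCDF (stdGaussPDF x) x := by
  have hint := integrable_pdf
  have hftc : HasDerivAt (fun y => ∫ u in (0:ℝ)..y, stdGaussPDF u) (stdGaussPDF x) x :=
    intervalIntegral.integral_hasDerivAt_right hint.intervalIntegrable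
      (continuous_pdf.stronglyMeasurableAtFilter volume (nhds x))
      continuous_pdf.continuousAt
  have h : HasDerivAt (fun y => (∫ u in Set.Iic (0:ℝ), stdGaussPDF u) +
      ∫ u in (0:ℝ)..y, stdGaussPDF u) (stdGaussPDF x) x := by
    simpa [Pi.add_def] using (hasDerivAt_const x (∫ u in Set.Iic (0:ℝ), stdGaussPDF u)).add hftc
  refine h.congr_of_eventuallyEq (Filter.Eventually.of_forall fun y => ?_)
  have := intervalIntegral.integral_Iic_sub_Iic (μ := volume)
    (hint.integrableOn (s := Set.Iic (0:ℝ))) (hint.integrableOn (s := Set.Iic y))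
  unfold stdGaussCDF
  dsimp only
  linarith [this]

lemma main_eq (a C r : ℝ) :
    (∫ u in Set.Ioi (-(r / 2)),
        Real.exp (-(2 * a * C * u)) * (Real.exp (-u ^ 2 / 2) - Real.exp (-(u + r) ^ 2 / 2)))
      = H (a * C) (-(r / 2)) - Real.exp (2 * (a * C) * r) * H (a * C) (r / 2) := by
  set b := a * C with hb
  have hint := integrable_G b
  have hshift : Integrable (fun u => G b (u + r)) := integrable_shift hint r
  have hpt : ∀ u : ℝ,
      Real.exp (-(2 * a * C * u)) * (Real.exp (-u ^ 2 / 2) - Real.exp (-(u + r) ^ 2 / 2))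
        = G b u - Real.exp (2 * b * r) * G b (u + r) := by
    intro u
    unfold G
    rw [mul_sub, ← Real.exp_add, ← Real.exp_add, ← Real.exp_add, hb]
    ring_nf
  rw [MeasureTheory.setIntegral_congr_fun measurableSet_Ioi (fun u _ => hpt u)]
  rw [MeasureTheory.integral_sub hint.integrableOn
    ((hshift.const_mul (Real.exp (2 * b * r))).integrableOn)]
  rw [MeasureTheory.integral_const_mul]
  have : (∫ u in Set.Ioi (-(r / 2)), G b (u + r)) = ∫ u in Set.Ioi (r / 2), G b u := by
    rw [integral_Ioi_add_right (G b) (-(r / 2)) r, show -(r / 2) + r = r / 2 by ring]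
  rw [this]
  rfl

lemma target_eq (b r : ℝ) :
    (∫ u in Set.Iio (-(r / 2)), Real.exp (-u ^ 2 / 2) * (1 - Real.exp (b * (2 * u + r))))
      = Real.sqrt (2 * Real.pi) * stdGaussCDF (-(r / 2)) - Real.exp (b * r) * H b (r / 2) := by
  have h0 : Integrable (fun x : ℝ => Real.exp (-x ^ 2 / 2)) := by
    have h0' : Integrable (fun x : ℝ => Real.exp (-(1 / 2 : ℝ) * x ^ 2)) :=
      integrable_exp_neg_mul_sq (by norm_num)
    exact h0'.congr (Filter.Eventually.of_forall fun u => by ring_nf)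
  have hGneg : Integrable (fun u => G b (-u)) := (integrable_G b).comp_neg
  have hpt : ∀ u : ℝ,
      Real.exp (-u ^ 2 / 2) * (1 - Real.exp (b * (2 * u + r)))
        = Real.exp (-u ^ 2 / 2) - Real.exp (b * r) * G b (-u) := by
    intro u
    unfold G
    rw [mul_sub, mul_one, ← Real.exp_add, ← Real.exp_add]
    ring_nf
  rw [MeasureTheory.setIntegral_congr_fun measurableSet_Iio (fun u _ => hpt u)]
  rw [MeasureTheory.integral_sub h0.integrableOn
    ((hGneg.const_mul (Real.exp (b * r))).integrableOn)]
  rw [MeasureTheory.integral_const_mul]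
  have hsqrt : Real.sqrt (2 * Real.pi) ≠ 0 :=
    ne_of_gt (Real.sqrt_pos.mpr (by positivity))
  have hcdf : (∫ u in Set.Iio (-(r / 2)), Real.exp (-u ^ 2 / 2))
      = Real.sqrt (2 * Real.pi) * stdGaussCDF (-(r / 2)) := by
    rw [← MeasureTheory.integral_Iic_eq_integral_Iio]
    unfold stdGaussCDF stdGaussPDF
    rw [MeasureTheory.integral_const_mul, ← mul_assoc, mul_inv_cancel₀ hsqrt, one_mul]
  have hneg : (∫ u in Set.Iio (-(r / 2)), G b (-u)) = H b (r / 2) := by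
    rw [← MeasureTheory.integral_Iic_eq_integral_Iio,
      integral_comp_neg_Iic (-(r / 2)) (G b)]
    unfold H
    rw [show -(-(r / 2)) = r / 2 by ring]
  rw [hcdf, hneg]

end Stmt6Aux

open Stmt6Aux in
theorem stmt6 (a C : ℝ) (ha : 0 < a) (hC : 0 < C) (r : ℝ) (hr : 0 ≤ r) :
    HasDerivAt
      (fun r : ℝ =>
        2 * Real.exp (a * C * r) * stdGaussCDF (-(r / 2))
          + (Real.sqrt (2 * Real.pi))⁻¹ *
            ∫ u in Set.Ioi (-(r / 2)),
              Real.exp (-(2 * a * C * u)) *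
                (Real.exp (-u ^ 2 / 2) - Real.exp (-(u + r) ^ 2 / 2)))
      ((2 * a * C / Real.sqrt (2 * Real.pi)) * Real.exp (a * C * r) *
        ∫ u in Set.Iio (-(r / 2)),
          Real.exp (-u ^ 2 / 2) * (1 - Real.exp (a * C * (2 * u + r))))
      r := by
  have hsqrtpos : (0:ℝ) < Real.sqrt (2 * Real.pi) := Real.sqrt_pos.mpr (by positivity)
  have hhalf : HasDerivAt (fun r : ℝ => -(r / 2)) (-(1/2)) r := by
    simpa [Pi.neg_def] using ((hasDerivAt_id r).div_const 2).neg
  have hhalf' : HasDerivAt (fun r : ℝ => r / 2) (1/2) r := by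
    simpa using (hasDerivAt_id r).div_const 2
  have h1 : HasDerivAt (fun r : ℝ => stdGaussCDF (-(r / 2)))
      (stdGaussPDF (-(r / 2)) * (-(1/2))) r :=
    HasDerivAt.comp (h₂ := stdGaussCDF) (h := fun r : ℝ => -(r / 2)) r (hasDerivAt_CDF (-(r / 2))) hhalf
  have h2 : HasDerivAt (fun r : ℝ => H (a * C) (-(r / 2)))
      (-(G (a * C) (-(r / 2))) * (-(1/2))) r :=
    HasDerivAt.comp (h₂ := H (a * C)) (h := fun r : ℝ => -(r / 2)) r (hasDerivAt_H (a * C) (-(r / 2))) hhalf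
  have h3 : HasDerivAt (fun r : ℝ => H (a * C) (r / 2))
      (-(G (a * C) (r / 2)) * (1/2)) r :=
    HasDerivAt.comp (h₂ := H (a * C)) (h := fun r : ℝ => r / 2) r (hasDerivAt_H (a * C) (r / 2)) hhalf'
  have hexp1 : HasDerivAt (fun r : ℝ => Real.exp (a * C * r))
      (Real.exp (a * C * r) * (a * C)) r := by
    simpa using ((hasDerivAt_id r).const_mul (a * C)).exp
  have hexp2 : HasDerivAt (fun r : ℝ => Real.exp (2 * (a * C) * r))
      (Real.exp (2 * (a * C) * r) * (2 * (a * C))) r := by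
    simpa using ((hasDerivAt_id r).const_mul (2 * (a * C))).exp
  have hF : HasDerivAt
      (fun r : ℝ => 2 * Real.exp (a * C * r) * stdGaussCDF (-(r / 2))
        + (Real.sqrt (2 * Real.pi))⁻¹ *
          (H (a * C) (-(r / 2)) - Real.exp (2 * (a * C) * r) * H (a * C) (r / 2)))
      ((2 * (Real.exp (a * C * r) * (a * C))) * stdGaussCDF (-(r / 2))
        + 2 * Real.exp (a * C * r) * (stdGaussPDF (-(r / 2)) * (-(1/2)))
        + (Real.sqrt (2 * Real.pi))⁻¹ *
          ((-(G (a * C) (-(r / 2))) * (-(1/2)))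
            - (Real.exp (2 * (a * C) * r) * (2 * (a * C)) * H (a * C) (r / 2)
              + Real.exp (2 * (a * C) * r) * (-(G (a * C) (r / 2)) * (1/2))))) r := by
    have hA : HasDerivAt (fun r : ℝ => 2 * Real.exp (a * C * r) * stdGaussCDF (-(r / 2)))
        ((2 * (Real.exp (a * C * r) * (a * C))) * stdGaussCDF (-(r / 2))
          + 2 * Real.exp (a * C * r) * (stdGaussPDF (-(r / 2)) * (-(1/2)))) r :=
      (hexp1.const_mul 2).mul h1
    have hB : HasDerivAt (fun r : ℝ => Real.exp (2 * (a * C) * r) * H (a * C) (r / 2))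
        (Real.exp (2 * (a * C) * r) * (2 * (a * C)) * H (a * C) (r / 2)
          + Real.exp (2 * (a * C) * r) * (-(G (a * C) (r / 2)) * (1/2))) r := hexp2.mul h3
    exact hA.add (((h2.sub hB)).const_mul (Real.sqrt (2 * Real.pi))⁻¹)
  have hfun : (fun r : ℝ =>
        2 * Real.exp (a * C * r) * stdGaussCDF (-(r / 2))
          + (Real.sqrt (2 * Real.pi))⁻¹ *
            ∫ u in Set.Ioi (-(r / 2)),
              Real.exp (-(2 * a * C * u)) *
                (Real.exp (-u ^ 2 / 2) - Real.exp (-(u + r) ^ 2 / 2)))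
      = (fun r : ℝ => 2 * Real.exp (a * C * r) * stdGaussCDF (-(r / 2))
        + (Real.sqrt (2 * Real.pi))⁻¹ *
          (H (a * C) (-(r / 2)) - Real.exp (2 * (a * C) * r) * H (a * C) (r / 2))) := by
    funext s
    rw [main_eq a C s]
  rw [hfun]
  have hval : ((2 * a * C / Real.sqrt (2 * Real.pi)) * Real.exp (a * C * r) *
        ∫ u in Set.Iio (-(r / 2)),
          Real.exp (-u ^ 2 / 2) * (1 - Real.exp (a * C * (2 * u + r))))
      = ((2 * (Real.exp (a * C * r) * (a * C))) * stdGaussCDF (-(r / 2))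
        + 2 * Real.exp (a * C * r) * (stdGaussPDF (-(r / 2)) * (-(1/2)))
        + (Real.sqrt (2 * Real.pi))⁻¹ *
          ((-(G (a * C) (-(r / 2))) * (-(1/2)))
            - (Real.exp (2 * (a * C) * r) * (2 * (a * C)) * H (a * C) (r / 2)
              + Real.exp (2 * (a * C) * r) * (-(G (a * C) (r / 2)) * (1/2))))) := by
    rw [target_eq (a * C) r]
    have e1 : G (a * C) (-(r / 2)) = Real.exp (a * C * r) * Real.exp (-(r / 2) ^ 2 / 2) := by
      unfold G; rw [← Real.exp_add]; congr 1; ring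
    have e2 : Real.exp (2 * (a * C) * r) * G (a * C) (r / 2)
        = Real.exp (a * C * r) * Real.exp (-(r / 2) ^ 2 / 2) := by
      unfold G; rw [← Real.exp_add, ← Real.exp_add]; congr 1; ring
    have e3 : stdGaussPDF (-(r / 2))
        = (Real.sqrt (2 * Real.pi))⁻¹ * Real.exp (-(r / 2) ^ 2 / 2) := by
      unfold stdGaussPDF; ring_nf
    have e4 : Real.exp (2 * (a * C) * r) = Real.exp (a * C * r) * Real.exp (a * C * r) := by
      rw [← Real.exp_add]; congr 1; ring
    rw [e1, e3, e4]
    have hGr : Real.exp (a * C * r) * Real.exp (a * C * r) * G (a * C) (r / 2)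
        = Real.exp (a * C * r) * Real.exp (-(r / 2) ^ 2 / 2) := by rw [← e4]; exact e2
    have hs : (Real.sqrt (2 * Real.pi))⁻¹ * Real.sqrt (2 * Real.pi) = 1 :=
      inv_mul_cancel₀ (ne_of_gt hsqrtpos)
    linear_combination (2 * a * C * Real.exp (a * C * r) * stdGaussCDF (-(r / 2))) * hs
      - (1/2) * (Real.sqrt (2 * Real.pi))⁻¹ * hGr
  rw [hval]
  exact hF
end

section
/- For any constant ε̄ > 0, both functions x ↦ ε̄ x / (2(1 − e^{−x}) + ε̄ x) and x ↦ ε̄ x² / (2(1 − e^{−x}) + ε̄ x²) are non-decreasing on [0, ∞). -/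
lemma aux_anti13 : AntitoneOn (fun t : ℝ => (1 - Real.exp (-t)) / t) (Set.Ioi 0) := by
  apply antitoneOn_of_deriv_nonpos (convex_Ioi 0)
  · apply ContinuousOn.div (by fun_prop) continuousOn_id
    intro t ht; exact ne_of_gt ht
  · rw [interior_Ioi]
    intro t ht
    have h1 : HasDerivAt (fun t : ℝ => 1 - Real.exp (-t)) (Real.exp (-t)) t := by
      have h2 := (Real.hasDerivAt_exp (-t)).comp t (hasDerivAt_neg t)
      simpa [Pi.sub_def, Function.comp_def] using (hasDerivAt_const t (1:ℝ)).sub h2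
    exact ((h1.div (hasDerivAt_id t) (ne_of_gt ht)).differentiableAt).differentiableWithinAt
  · rw [interior_Ioi]
    intro t ht
    have h1 : HasDerivAt (fun t : ℝ => 1 - Real.exp (-t)) (Real.exp (-t)) t := by
      have h2 := (Real.hasDerivAt_exp (-t)).comp t (hasDerivAt_neg t)
      simpa [Pi.sub_def, Function.comp_def] using (hasDerivAt_const t (1:ℝ)).sub h2
    have hd := (h1.div (hasDerivAt_id t) (ne_of_gt ht)).deriv
    simp only [Pi.div_def, id_eq] at hd
    rw [hd]
    apply div_nonpos_of_nonpos_of_nonneg _ (by positivity)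
    have hmul : Real.exp (-t) * Real.exp t = 1 := by
      rw [← Real.exp_add]; simp
    nlinarith [mul_le_mul_of_nonneg_left (Real.add_one_le_exp t) (Real.exp_pos (-t)).le]

lemma key13 {x y : ℝ} (hx : 0 < x) (hxy : x ≤ y) :
    x * (1 - Real.exp (-y)) ≤ y * (1 - Real.exp (-x)) := by
  have hy : 0 < y := lt_of_lt_of_le hx hxy
  have h := aux_anti13 (Set.mem_Ioi.mpr hx) (Set.mem_Ioi.mpr hy) hxy
  simp only [div_le_div_iff₀ hy hx] at h
  linarith

theorem stmt13 (ε : ℝ) (hε : 0 < ε) :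
    MonotoneOn (fun x : ℝ => ε * x / (2 * (1 - Real.exp (-x)) + ε * x)) (Set.Ici 0) ∧
      MonotoneOn (fun x : ℝ => ε * x ^ 2 / (2 * (1 - Real.exp (-x)) + ε * x ^ 2))
        (Set.Ici 0) := by
  constructor
  · intro x hx y hy hxy
    simp only [Set.mem_Ici] at hx hy
    rcases eq_or_lt_of_le hx with h0 | h0
    · subst h0
      simp only [mul_zero, zero_div, neg_zero]
      apply div_nonneg (by positivity)
      have : Real.exp (-y) ≤ 1 := Real.exp_le_one_iff.mpr (by linarith)
      nlinarith
    · have hy0 : 0 < y := lt_of_lt_of_le h0 hxy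
      have hdx : 0 < 2 * (1 - Real.exp (-x)) + ε * x := by
        have : Real.exp (-x) < 1 := Real.exp_lt_one_iff.mpr (by linarith)
        nlinarith
      have hdy : 0 < 2 * (1 - Real.exp (-y)) + ε * y := by
        have : Real.exp (-y) < 1 := Real.exp_lt_one_iff.mpr (by linarith)
        nlinarith
      rw [div_le_div_iff₀ hdx hdy]
      nlinarith [key13 h0 hxy]
  · intro x hx y hy hxy
    simp only [Set.mem_Ici] at hx hy
    rcases eq_or_lt_of_le hx with h0 | h0
    · subst h0
      simp only [ne_eq, OfNat.ofNat_ne_zero, not_false_eq_true, zero_pow, mul_zero,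
        zero_div, neg_zero]
      apply div_nonneg (by positivity)
      have : Real.exp (-y) ≤ 1 := Real.exp_le_one_iff.mpr (by linarith)
      nlinarith
    · have hy0 : 0 < y := lt_of_lt_of_le h0 hxy
      have hdx : 0 < 2 * (1 - Real.exp (-x)) + ε * x ^ 2 := by
        have : Real.exp (-x) < 1 := Real.exp_lt_one_iff.mpr (by linarith)
        nlinarith
      have hdy : 0 < 2 * (1 - Real.exp (-y)) + ε * y ^ 2 := by
        have : Real.exp (-y) < 1 := Real.exp_lt_one_iff.mpr (by linarith)
        nlinarith
      rw [div_le_div_iff₀ hdx hdy]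
      have hk := key13 h0 hxy
      have hex : 0 ≤ 1 - Real.exp (-x) := by
        have : Real.exp (-x) ≤ 1 := Real.exp_le_one_iff.mpr (by linarith)
        linarith
      nlinarith [mul_le_mul_of_nonneg_left hk h0.le,
        mul_le_mul_of_nonneg_left (mul_le_mul_of_nonneg_right hxy hex) hy0.le]
end
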